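/- Let m ≥ 5 and 2 ≤ a ≤ m−2, and let σ = 12⋯(a−1)(a+1)a(a+2)(a+3)⋯m be the elementary transposition (a, a+1) in S_m. If m−a ≤ a, then the overlap set of σ is O_σ = {a, a+1, ..., m−1}; if a ≤ m−a, then O_σ = {m−a, m−a+1, ..., m−1}. -/

import Mathlib

/-- The overlap set of a pattern `σ ∈ S_m`:
`O_σ = { i ∈ [m−1] : std(σ_{i+1} ⋯ σ_m) = std(σ_1 ⋯ σ_{m−i}) }`, where equality of
standardizations of the suffix and prefix of length `m - i` is expressed by their
being order-isomorphic (indices of `σ` are 0-based here). -/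
def overlapSet {m : ℕ} (σ : Equiv.Perm (Fin m)) : Set ℕ :=
  { i | 1 ≤ i ∧ i ≤ m - 1 ∧ ∀ s t : Fin (m - i),
      (σ ⟨i + s.val, by omega⟩ < σ ⟨i + t.val, by omega⟩ ↔
        σ ⟨s.val, by omega⟩ < σ ⟨t.val, by omega⟩) }

lemma swap_val_eq (a m : ℕ) (hm : 5 ≤ m) (ha : 2 ≤ a) (ha' : a ≤ m - 2) (j : Fin m) :
    ((Equiv.swap (⟨a - 1, by omega⟩ : Fin m) ⟨a, by omega⟩) j).val =
      if j.val = a - 1 then a else if j.val = a then a - 1 else j.val := by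
  rw [Equiv.swap_apply_def]
  split_ifs with h1 h2 h3 h4 h5 <;>
    simp only [Fin.ext_iff, Fin.val_mk] at * <;> omega

lemma overlapSet_transpositional_key (a m : ℕ) (hm : 5 ≤ m) (ha : 2 ≤ a)
    (ha' : a ≤ m - 2) :
    overlapSet (Equiv.swap (⟨a - 1, by omega⟩ : Fin m) ⟨a, by omega⟩) =
      Set.Icc (max a (m - a)) (m - 1) := by
  have hf := swap_val_eq a m hm ha ha'
  ext i
  simp only [overlapSet, Set.mem_setOf_eq, Set.mem_Icc, max_le_iff]
  constructor
  · rintro ⟨h1, h2, H⟩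
    refine ⟨⟨?_, ?_⟩, h2⟩
    · by_contra hia
      push_neg at hia
      have hs : a - 1 - i < m - i := by omega
      have ht : a - i < m - i := by omega
      have := H ⟨a - 1 - i, hs⟩ ⟨a - i, ht⟩
      rw [Fin.lt_def, Fin.lt_def, hf, hf, hf, hf] at this
      simp only at this
      split_ifs at this <;> omega
    · by_contra hia
      push_neg at hia
      have hs : a - 1 < m - i := by omega
      have ht : a < m - i := by omega
      have := H ⟨a - 1, hs⟩ ⟨a, ht⟩
      rw [Fin.lt_def, Fin.lt_def, hf, hf, hf, hf] at this
      simp only at this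
      split_ifs at this <;> omega
  · rintro ⟨⟨hai, hmai⟩, h2⟩
    refine ⟨by omega, h2, fun s t => ?_⟩
    have hs := s.isLt
    have ht := t.isLt
    rw [Fin.lt_def, Fin.lt_def, hf, hf, hf, hf]
    simp only
    split_ifs <;> omega

/-- Let `m ≥ 5` and `2 ≤ a ≤ m−2`, and let
`σ = 12⋯(a−1)(a+1)a(a+2)⋯m` be the elementary transposition `(a, a+1)` of `S_m`
(0-based: the swap of `a−1` and `a` in `Fin m`). If `m−a ≤ a` then
`O_σ = {a, a+1, …, m−1}`, and if `a ≤ m−a` then `O_σ = {m−a, m−a+1, …, m−1}`. -/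
theorem overlapSet_transpositional (m a : ℕ) (hm : 5 ≤ m) (ha : 2 ≤ a)
    (ha' : a ≤ m - 2) :
    (m - a ≤ a →
      overlapSet (Equiv.swap (⟨a - 1, by omega⟩ : Fin m) ⟨a, by omega⟩) =
        Set.Icc a (m - 1)) ∧
    (a ≤ m - a →
      overlapSet (Equiv.swap (⟨a - 1, by omega⟩ : Fin m) ⟨a, by omega⟩) =
        Set.Icc (m - a) (m - 1)) := by
  have key := overlapSet_transpositional_key a m hm ha ha'
  exact ⟨fun h => by rw [key, max_eq_left h], fun h => by rw [key, max_eq_right h]⟩
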